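/- For the dumbbell graph, the entropy-one condition det(A_{−l} − Id) = 0 for its 6×6 weighted adjacency matrix is equivalent to e^{−z} = √((e^{−x−y} − e^{−x} − e^{−y} + 1)/(4e^{−x−y})), equivalently e^{−2z} = (e^x−1)(e^y−1)/4 after simplification, for x, y, z > 0 with (e^x−1)(e^y−1) < 4. -/

import Mathlib

open Real

set_option maxRecDepth 10000 in
set_option maxHeartbeats 4000000 in
private theorem dumbbell_aux_det6 (a b c : ℝ) :
    Matrix.det (!![a,0,a,0,0,0; 0,b,0,0,0,b; 0,c,0,0,c,0; 0,0,a,a,0,0;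
        0,0,0,0,b,b; c,0,0,c,0,0] - (1 : Matrix (Fin 6) (Fin 6) ℝ))
    = (1-a)*(1-b)*((1-a)*(1-b) - 4*a*b*c^2) := by
  have aux5 : ∀ {α : Type} (a₀ a₁ a₂ a₃ a₄ a₅ : α), ![a₀,a₁,a₂,a₃,a₄,a₅] 5 = a₅ := fun _ _ _ _ _ _ => rfl
  have auxc2 : ∀ {α : Type} (a₀ a₁ a₂ a₃ a₄ : α), ![a₀,a₁,a₂,a₃,a₄] (Fin.castSucc 2) = a₂ := fun _ _ _ _ _ => rfl
  have auxc3 : ∀ {α : Type} (a₀ a₁ a₂ a₃ a₄ : α), ![a₀,a₁,a₂,a₃,a₄] ((Fin.succ 2).castSucc) = a₃ := fun _ _ _ _ _ => rfl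
  have auxv5 : ∀ {α : Type} (x : α) (u : Fin 5 → α), Matrix.vecCons x u 5 = u 4 := fun _ _ => rfl
  have auxv4 : ∀ {α : Type} (x : α) (u : Fin 4 → α), Matrix.vecCons x u 4 = u 3 := fun _ _ => rfl
  have auxv3 : ∀ {α : Type} (x : α) (u : Fin 3 → α), Matrix.vecCons x u 3 = u 2 := fun _ _ => rfl
  have auxv2 : ∀ {α : Type} (x : α) (u : Fin 2 → α), Matrix.vecCons x u 2 = u 1 := fun _ _ => rfl
  have auxv1 : ∀ {α : Type} (x : α) (u : Fin 1 → α), Matrix.vecCons x u 1 = u 0 := fun _ _ => rfl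
  have h : (!![a,0,a,0,0,0; 0,b,0,0,0,b; 0,c,0,0,c,0; 0,0,a,a,0,0;
        0,0,0,0,b,b; c,0,0,c,0,0] - (1 : Matrix (Fin 6) (Fin 6) ℝ))
      = !![a-1,0,a,0,0,0; 0,b-1,0,0,0,b; 0,c,-1,0,c,0; 0,0,a,a-1,0,0;
          0,0,0,0,b-1,b; c,0,0,c,0,-1] := by
    ext i j
    fin_cases i <;> fin_cases j <;>
      simp [Matrix.one_apply, Matrix.cons_val_succ, Matrix.sub_apply, auxv5, auxv4, auxv3, auxv2, auxv1]
  rw [h]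
  simp [Matrix.det_succ_row_zero, Fin.sum_univ_succ, Fin.succAbove,
    Matrix.cons_val_succ, aux5, auxc2, auxc3]
  ring

theorem dumbbell_entropy_one_condition (x y z : ℝ) (hx : 0 < x) (hy : 0 < y) (hz : 0 < z)
    (hdom : (exp x - 1) * (exp y - 1) < 4) :
    (Matrix.det
      (!![exp (-x), 0, exp (-x), 0, 0, 0;
          0, exp (-y), 0, 0, 0, exp (-y);
          0, exp (-z), 0, 0, exp (-z), 0;
          0, 0, exp (-x), exp (-x), 0, 0;
          0, 0, 0, 0, exp (-y), exp (-y);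
          exp (-z), 0, 0, exp (-z), 0, 0] - (1 : Matrix (Fin 6) (Fin 6) ℝ)) = 0 ↔
      exp (-z) = Real.sqrt ((exp (-x - y) - exp (-x) - exp (-y) + 1) / (4 * exp (-x - y)))) ∧
    (exp (-z) = Real.sqrt ((exp (-x - y) - exp (-x) - exp (-y) + 1) / (4 * exp (-x - y))) ↔
      exp (-2 * z) = (exp x - 1) * (exp y - 1) / 4) := by
  have ha0 : 0 < exp (-x) := exp_pos _
  have hb0 : 0 < exp (-y) := exp_pos _
  have hc0 : 0 < exp (-z) := exp_pos _
  have ha1 : exp (-x) < 1 := by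
    have h := Real.exp_lt_exp.mpr (show -x < (0:ℝ) by linarith)
    simpa using h
  have hb1 : exp (-y) < 1 := by
    have h := Real.exp_lt_exp.mpr (show -y < (0:ℝ) by linarith)
    simpa using h
  have hxy : exp (-x - y) = exp (-x) * exp (-y) := by
    rw [show -x - y = -x + -y by ring, exp_add]
  have hD0 : 0 ≤ (exp (-x - y) - exp (-x) - exp (-y) + 1) / (4 * exp (-x - y)) := by
    rw [hxy]
    apply div_nonneg
    · nlinarith
    · positivity
  have key : (exp (-z) = Real.sqrt ((exp (-x - y) - exp (-x) - exp (-y) + 1) / (4 * exp (-x - y)))) ↔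
      exp (-z) ^ 2 = (exp (-x - y) - exp (-x) - exp (-y) + 1) / (4 * exp (-x - y)) := by
    constructor
    · intro h; rw [h, Real.sq_sqrt hD0]
    · intro h; rw [← h, Real.sqrt_sq hc0.le]
  constructor
  · rw [dumbbell_aux_det6, key, hxy]
    constructor
    · intro h
      have h2 : (1 - exp (-x)) * (1 - exp (-y)) - 4 * exp (-x) * exp (-y) * exp (-z) ^ 2 = 0 := by
        rcases mul_eq_zero.mp h with h' | h'
        · exfalso; rcases mul_eq_zero.mp h' with h'' | h'' <;> nlinarith
        · exact h'
      field_simp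
      nlinarith
    · intro h
      have h2 : (1 - exp (-x)) * (1 - exp (-y)) - 4 * exp (-x) * exp (-y) * exp (-z) ^ 2 = 0 := by
        field_simp at h
        nlinarith
      rw [h2]; ring
  · rw [key, hxy]
    have hez : exp (-2 * z) = exp (-z) ^ 2 := by
      rw [show -2 * z = -z + -z by ring, exp_add]; ring
    have hax : exp x = (exp (-x))⁻¹ := by rw [← Real.exp_neg, neg_neg]
    have hby : exp y = (exp (-y))⁻¹ := by rw [← Real.exp_neg, neg_neg]
    have heq : (exp (-x) * exp (-y) - exp (-x) - exp (-y) + 1) / (4 * (exp (-x) * exp (-y)))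
        = (exp x - 1) * (exp y - 1) / 4 := by
      rw [hax, hby]
      field_simp
      ring
    rw [hez, heq]
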